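/- Let r ≥ 2 be an integer and define f(ξ) = (1+ξ)^(1/r) + (1-ξ)^(1/r - 1) - ξ - 2 for ξ ∈ [0, 1/2]. Then f(ξ) > 0 for all ξ ∈ (0, 1/2]. -/

import Mathlib

theorem stmt_0 (r : ℕ) (hr : 2 ≤ r)
    (f : ℝ → ℝ)
    (hf : ∀ ξ : ℝ, f ξ = (1 + ξ) ^ ((1 : ℝ) / r) + (1 - ξ) ^ ((1 : ℝ) / r - 1) - ξ - 2) :
    ∀ ξ : ℝ, 0 < ξ → ξ ≤ 1 / 2 → 0 < f ξ := by
  intro ξ hξ0 hξ2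
  rw [hf]
  set a : ℝ := (1 : ℝ) / r with ha
  have hr0 : (0 : ℝ) < r := by positivity
  have hrr : (2 : ℝ) ≤ r := by exact_mod_cast hr
  have ha0 : 0 < a := by positivity
  have ha2 : a ≤ 1 / 2 := by
    rw [ha, div_le_div_iff₀ hr0 (by norm_num)]
    linarith
  set b : ℝ := 1 - a with hb
  have hb0 : 1 / 2 ≤ b := by simp [hb]; linarith
  have hb1 : b < 1 := by simp [hb]; linarith
  have h1p : (0 : ℝ) < 1 + ξ := by linarith
  have h1m : (0 : ℝ) < 1 - ξ := by linarith
  -- Bernoulli upper bounds for exponent b ∈ (0,1)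
  have hP : (1 + ξ) ^ b ≤ 1 + b * ξ := by
    have := rpow_one_add_le_one_add_mul_self (s := ξ) (by linarith) (p := b)
      (by linarith) (le_of_lt hb1)
    linarith
  have hQ : (1 - ξ) ^ b ≤ 1 - b * ξ := by
    have := rpow_one_add_le_one_add_mul_self (s := -ξ) (by linarith) (p := b)
      (by linarith) (le_of_lt hb1)
    have h : (1 : ℝ) + -ξ = 1 - ξ := by ring
    rw [h] at this
    linarith
  set X := (1 + ξ) ^ a with hX
  set Y := (1 - ξ) ^ (a - 1) with hY
  set P := (1 + ξ) ^ b with hPd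
  set Q := (1 - ξ) ^ b with hQd
  have hXpos : 0 < X := Real.rpow_pos_of_pos h1p a
  have hYpos : 0 < Y := Real.rpow_pos_of_pos h1m (a - 1)
  have hPpos : 0 < P := Real.rpow_pos_of_pos h1p b
  have hQpos : 0 < Q := Real.rpow_pos_of_pos h1m b
  have hXP : X * P = 1 + ξ := by
    rw [hX, hPd, ← Real.rpow_add h1p]
    have : a + b = 1 := by rw [hb]; ring
    rw [this, Real.rpow_one]
  have hYQ : Y * Q = 1 := by
    rw [hY, hQd, ← Real.rpow_add h1m]
    have : a - 1 + b = 0 := by rw [hb]; ring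
    rw [this, Real.rpow_zero]
  have hbxi : b * ξ < 1 := by nlinarith [mul_pos hξ0 (by linarith : (0:ℝ) < 1 - b)]
  -- X ≥ (1+ξ)/(1+bξ), Y ≥ 1/(1-bξ)
  have hX' : X * (1 + b * ξ) ≥ 1 + ξ := by
    calc X * (1 + b * ξ) ≥ X * P := mul_le_mul_of_nonneg_left hP hXpos.le
    _ = 1 + ξ := hXP
  have hY' : Y * (1 - b * ξ) ≥ 1 := by
    calc Y * (1 - b * ξ) ≥ Y * Q := mul_le_mul_of_nonneg_left hQ hYpos.le
    _ = 1 := hYQ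
  have hd1 : (0 : ℝ) < 1 + b * ξ := by nlinarith
  have hd2 : (0 : ℝ) < 1 - b * ξ := by linarith
  have key : 0 < b * ξ ^ 2 * (2 * b - 1 + b * ξ) := by
    apply mul_pos (mul_pos (by linarith) (by positivity))
    nlinarith [mul_pos (by linarith : (0:ℝ) < b) hξ0]
  have hXge : (1 + ξ) / (1 + b * ξ) ≤ X := (div_le_iff₀ hd1).mpr (by linarith)
  have hYge : 1 / (1 - b * ξ) ≤ Y := (div_le_iff₀ hd2).mpr (by linarith)
  have heq : (1 + ξ) / (1 + b * ξ) + 1 / (1 - b * ξ) - (ξ + 2)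
      = b * ξ ^ 2 * (2 * b - 1 + b * ξ) / ((1 + b * ξ) * (1 - b * ξ)) := by
    rw [div_add_div _ _ hd1.ne' hd2.ne', eq_div_iff (mul_pos hd1 hd2).ne', sub_mul,
      div_mul_cancel₀ _ (mul_pos hd1 hd2).ne']
    ring
  have hpos : 0 < b * ξ ^ 2 * (2 * b - 1 + b * ξ) / ((1 + b * ξ) * (1 - b * ξ)) :=
    div_pos key (mul_pos hd1 hd2)
  linarith [heq ▸ hpos]
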